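/- In R^2, the set C = conv{e_1, -e_1} + cone{e_2} (where e_1, e_2 are the standard unit vectors) satisfies exc(C, recc C) = 1, but C is not self-bounded: there is no y in R^2 with {y} + recc C ⊇ C. -/

import Mathlib

open Metric Set Filter
open scoped ENNReal Pointwise Topology RealInnerProductSpace

noncomputable section

/-- The recession cone of a set `C`. -/
def recc {n : ℕ} (C : Set (EuclideanSpace ℝ (Fin n))) : Set (EuclideanSpace ℝ (Fin n)) :=
  {d | ∀ x ∈ C, ∀ t : ℝ, 0 ≤ t → x + t • d ∈ C}

/-- The excess of `C₁` over `C₂`: `sup_{c₁ ∈ C₁} inf_{c₂ ∈ C₂} ‖c₁ - c₂‖`, valued in `ℝ≥0∞`. -/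
def exc {n : ℕ} (C₁ C₂ : Set (EuclideanSpace ℝ (Fin n))) : ℝ≥0∞ :=
  ⨆ x ∈ C₁, EMetric.infEdist x C₂

theorem stmt3 :
    let e₁ : EuclideanSpace ℝ (Fin 2) := EuclideanSpace.single 0 1
    let e₂ : EuclideanSpace ℝ (Fin 2) := EuclideanSpace.single 1 1
    let C : Set (EuclideanSpace ℝ (Fin 2)) :=
      convexHull ℝ {e₁, -e₁} + {x | ∃ t : ℝ, 0 ≤ t ∧ x = t • e₂}
    exc C (recc C) = 1 ∧ ¬ ∃ y : EuclideanSpace ℝ (Fin 2), C ⊆ {y} + recc C := by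
  intro e₁ e₂ C
  have he10 : e₁ 0 = 1 := by simp [e₁, EuclideanSpace.single_apply]
  have he11 : e₁ 1 = 0 := by simp [e₁, EuclideanSpace.single_apply]
  have he20 : e₂ 0 = 0 := by simp [e₂, EuclideanSpace.single_apply]
  have he21 : e₂ 1 = 1 := by simp [e₂, EuclideanSpace.single_apply]
  -- characterize C
  have hC : ∀ x : EuclideanSpace ℝ (Fin 2), x ∈ C ↔ |x 0| ≤ 1 ∧ 0 ≤ x 1 := by
    intro x
    constructor
    · rintro ⟨a, ha, b, ⟨t, ht, rfl⟩, rfl⟩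
      rw [convexHull_pair] at ha
      obtain ⟨u, v, hu, hv, huv, rfl⟩ := ha
      have h0 : (u • e₁ + v • (-e₁) + t • e₂) 0 = u - v := by
        simp [he10, he20]; ring
      have h1 : (u • e₁ + v • (-e₁) + t • e₂) 1 = t := by
        simp [he11, he21]
      show |(u • e₁ + v • (-e₁) + t • e₂) 0| ≤ 1 ∧ 0 ≤ (u • e₁ + v • (-e₁) + t • e₂) 1
      rw [h0, h1]
      refine ⟨abs_le.mpr ⟨by linarith, by linarith⟩, ht⟩
    · rintro ⟨h1, h2⟩
      obtain ⟨hl, hr⟩ := abs_le.mp h1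
      refine ⟨((1 + x 0)/2) • e₁ + ((1 - x 0)/2) • (-e₁), ?_, (x 1) • e₂,
        ⟨x 1, h2, rfl⟩, ?_⟩
      · rw [convexHull_pair]
        exact ⟨(1 + x 0)/2, (1 - x 0)/2, by linarith, by linarith, by ring, rfl⟩
      · ext i
        fin_cases i <;> simp [he10, he11, he20, he21] <;> ring
  have he1C : e₁ ∈ C := (hC e₁).mpr (by rw [he10, he11]; norm_num)
  have hne1C : -e₁ ∈ C := (hC (-e₁)).mpr (by simp [he10, he11])
  -- characterize recc C
  have hrecc : ∀ d : EuclideanSpace ℝ (Fin 2), d ∈ recc C ↔ d 0 = 0 ∧ 0 ≤ d 1 := by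
    intro d
    constructor
    · intro hd
      have h1 := (hC _).mp (hd e₁ he1C 1 zero_le_one)
      have h2 := (hC _).mp (hd (-e₁) hne1C 1 zero_le_one)
      have e1 : (e₁ + (1:ℝ) • d) 0 = 1 + d 0 := by simp [he10]
      have e2 : (e₁ + (1:ℝ) • d) 1 = d 1 := by simp [he11]
      have e3 : ((-e₁) + (1:ℝ) • d) 0 = -1 + d 0 := by simp [he10]
      rw [e1, e2] at h1; rw [e3] at h2
      obtain ⟨ha, hb⟩ := h1
      obtain ⟨hc, -⟩ := h2
      obtain ⟨ha1, ha2⟩ := abs_le.mp ha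
      obtain ⟨hc1, hc2⟩ := abs_le.mp hc
      exact ⟨by linarith, hb⟩
    · rintro ⟨h0, h1⟩ x hx t ht
      obtain ⟨hx1, hx2⟩ := (hC x).mp hx
      refine (hC _).mpr ⟨?_, ?_⟩
      · have : (x + t • d) 0 = x 0 := by simp [h0]
        rw [this]; exact hx1
      · have : (x + t • d) 1 = x 1 + t * d 1 := by simp
        rw [this]; positivity
  -- distance formula
  have hdist : ∀ x y : EuclideanSpace ℝ (Fin 2),
      dist x y = Real.sqrt ((x 0 - y 0)^2 + (x 1 - y 1)^2) := by
    intro x y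
    rw [EuclideanSpace.dist_eq, Fin.sum_univ_two, Real.dist_eq, Real.dist_eq, sq_abs, sq_abs]
  constructor
  · apply le_antisymm
    · refine iSup₂_le fun x hx => ?_
      obtain ⟨hx1, hx2⟩ := (hC x).mp hx
      set p : EuclideanSpace ℝ (Fin 2) := (x 1) • e₂ with hp
      have hpr : p ∈ recc C := (hrecc p).mpr (by simp [hp, he20, he21, hx2])
      calc EMetric.infEdist x (recc C) ≤ edist x p := EMetric.infEdist_le_edist_of_mem hpr
        _ ≤ 1 := by
          rw [edist_dist, hdist]
          have hp0 : p 0 = 0 := by simp [hp, he20]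
          have hp1 : p 1 = x 1 := by simp [hp, he21]
          rw [hp0, hp1]
          have : Real.sqrt ((x 0 - 0)^2 + (x 1 - x 1)^2) = |x 0| := by
            rw [sub_self, sub_zero]
            simp [Real.sqrt_sq_eq_abs]
          rw [this, ← ENNReal.ofReal_one]
          exact ENNReal.ofReal_le_ofReal hx1
    · refine le_trans ?_ (le_iSup₂_of_le e₁ he1C le_rfl)
      refine EMetric.le_infEdist.mpr ?_
      intro d hd
      obtain ⟨hd0, hd1⟩ := (hrecc d).mp hd
      rw [edist_dist, hdist, he10, he11, hd0, ← ENNReal.ofReal_one]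
      apply ENNReal.ofReal_le_ofReal
      rw [show (1 - 0 : ℝ)^2 + (0 - d 1)^2 = 1 + d 1 ^ 2 by ring]
      nlinarith [Real.sq_sqrt (by positivity : (0:ℝ) ≤ 1 + d 1 ^ 2),
        Real.sqrt_nonneg (1 + d 1 ^ 2)]
  · rintro ⟨y, hy⟩
    obtain ⟨a, ha, b, hb, hab⟩ := hy he1C
    obtain ⟨a', ha', b', hb', hab'⟩ := hy hne1C
    rw [mem_singleton_iff] at ha ha'
    obtain ⟨hb0, -⟩ := (hrecc b).mp hb
    obtain ⟨hb0', -⟩ := (hrecc b').mp hb'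
    have h1 : (a + b) 0 = e₁ 0 := by rw [show a + b = e₁ from hab]
    have h2 : (a' + b') 0 = (-e₁) 0 := by rw [show a' + b' = -e₁ from hab']
    rw [ha] at h1
    rw [ha'] at h2
    simp [hb0, hb0', he10] at h1 h2
    linarith
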